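/- Both terms of the underlying potential are increasing in the effective noise: the entropy term S_u(Σ) is a nondecreasing function of Σ on (0,∞), and the energy term U_u(E) is a nondecreasing function of E on [0,∞) (equivalently, nondecreasing in Σ(E) = √(R(σ²+E))). -/

import Mathlib

open MeasureTheory ProbabilityTheory Filter Finset Real

noncomputable section

/-- Product of `B` i.i.d. standard Gaussians on `Fin B → ℝ` (law of `z`). -/
def stdGauss (B : ℕ) : Measure (Fin B → ℝ) :=
  Measure.pi fun _ => gaussianReal 0 1

/-- The `j`-th standard basis vector of `ℝ^B` (a section). -/
def basisVec (B : ℕ) (j : Fin B) : Fin B → ℝ := fun k => if k = j then 1 else 0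

/-- The MMSE denoiser `f_i(Σ)` of the effective Gaussian channel. -/
def denoiser (B : ℕ) (Sn : ℝ) (s z : Fin B → ℝ) (i : Fin B) : ℝ :=
  (1 + ∑ k ∈ Finset.univ.erase i,
      Real.exp ((s k - s i) * Real.logb 2 B / Sn ^ 2 +
        (z k - z i) * Real.sqrt (Real.logb 2 B) / Sn))⁻¹

/-- `E_{s,z}[ ∑_{i=1}^B (f_i(Σ) - s_i)^2 ]`, with `s` uniform over the basis vectors
and `z` i.i.d. standard Gaussian: the MMSE of the effective `B`-dimensional channel. -/
def mmseB (B : ℕ) (Sn : ℝ) : ℝ :=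
  (B : ℝ)⁻¹ * ∑ j : Fin B,
    ∫ z, (∑ i, (denoiser B Sn (basisVec B j) z i - basisVec B j i) ^ 2) ∂ stdGauss B

/-- Effective noise `Σ(E) = √(R(σ² + E))`. -/
def sigU (R σ2 E : ℝ) : ℝ := Real.sqrt (R * (σ2 + E))

/-- State evolution operator of the underlying system. -/
def Tu (B : ℕ) (R σ2 E : ℝ) : ℝ := mmseB B (sigU R σ2 E)

/-- Energy term of the underlying potential. -/
def Uu (R σ2 E : ℝ) : ℝ :=
  (1 / (2 * R)) * Real.logb 2 ((σ2 + E) * Real.exp (-(E / (σ2 + E))))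

/-- Entropy term of the underlying potential,
`S_u(Σ) = E_z[log_B(1 + ∑_{i=2}^B e_i(Σ))]`. -/
def Su (B : ℕ) (Sn : ℝ) : ℝ :=
  if h : 0 < B then
    letI : NeZero B := ⟨h.ne'⟩
    ∫ z, Real.logb B (1 + ∑ i ∈ Finset.univ.erase (0 : Fin B),
        Real.exp ((z i - z 0) * Real.sqrt (Real.logb 2 B) / Sn -
          Real.logb 2 B / Sn ^ 2)) ∂ stdGauss B
  else 0

/-- Potential of the underlying system. -/
def Fu (B : ℕ) (R σ2 E : ℝ) : ℝ := Uu R σ2 E - Su B (sigU R σ2 E)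

/-- The MSE floor `E₀ = lim_t T_u^{(t)}(0)`. -/
def mseFloor (B : ℕ) (R σ2 : ℝ) : ℝ :=
  limUnder atTop fun t : ℕ => (Tu B R σ2)^[t] 0

/-- Basin of attraction `𝒱₀` of the MSE floor. -/
def basin (B : ℕ) (R σ2 : ℝ) : Set ℝ :=
  {E | E ∈ Set.Icc (0:ℝ) 1 ∧
    Tendsto (fun t : ℕ => (Tu B R σ2)^[t] E) atTop (nhds (mseFloor B R σ2))}

/-- Free energy gap `ΔF_u` (`+∞` if the complement of the basin is empty). -/
def gapFu (B : ℕ) (R σ2 : ℝ) : EReal :=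
  ⨅ E ∈ Set.Icc (0:ℝ) 1 \ basin B R σ2,
    ((Fu B R σ2 E - Fu B R σ2 (mseFloor B R σ2) : ℝ) : EReal)

/-- Potential threshold `R_pot`. -/
def Rpot (B : ℕ) (σ2 : ℝ) : ℝ :=
  sSup {R : ℝ | 0 < R ∧ 0 < gapFu B R σ2}

/-- Effective noise `Σ_c(E)` of block `c` in the coupled system. -/
def sigC (R σ2 : ℝ) (Γ : ℕ) (J : Fin Γ → Fin Γ → ℝ) (E : Fin Γ → ℝ) (c : Fin Γ) : ℝ :=
  (Real.sqrt ((Γ : ℝ)⁻¹ * ∑ r, J r c / (R * (σ2 + E r))))⁻¹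

/-- Coupled state evolution operator `[T_c(E)]_r`. -/
def Tc (B : ℕ) (R σ2 : ℝ) (Γ : ℕ) (J : Fin Γ → Fin Γ → ℝ) (E : Fin Γ → ℝ) (r : Fin Γ) : ℝ :=
  (Γ : ℝ)⁻¹ * ∑ c, J r c * mmseB B (sigC R σ2 Γ J E c)

/-- Coupled potential `F_c`. -/
def Fc (B : ℕ) (R σ2 : ℝ) (Γ : ℕ) (J : Fin Γ → Fin Γ → ℝ) (E : Fin Γ → ℝ) : ℝ :=
  (∑ r, Uu R σ2 (E r)) - ∑ c, Su B (sigC R σ2 Γ J E c)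

/-- Shift operator: `[S(E)]_1 = E₀`, `[S(E)]_r = E_{r-1}` (0-based indexing). -/
def shiftProf (Γ : ℕ) (E0v : ℝ) (E : Fin Γ → ℝ) (r : Fin Γ) : ℝ :=
  if r.1 = 0 then E0v else E ⟨r.1 - 1, lt_of_le_of_lt (Nat.sub_le _ _) r.isLt⟩

/-- Partial derivative of a function of a profile with respect to coordinate `r`. -/
def pderiv (Γ : ℕ) (F : (Fin Γ → ℝ) → ℝ) (r : Fin Γ) (P : Fin Γ → ℝ) : ℝ :=
  deriv (fun x => F (Function.update P r x)) (P r)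

/-- Coupled SE operator with the pinning condition enforced on
`A = {1,…,3w} ∪ {Γ-3w+1,…,Γ}` (in 0-based indexing: `r < 3w` or `r ≥ Γ-3w`). -/
def TcPin (B : ℕ) (R σ2 : ℝ) (Γ w : ℕ) (J : Fin Γ → Fin Γ → ℝ) (E : Fin Γ → ℝ) (r : Fin Γ) : ℝ :=
  if r.1 < 3*w ∨ Γ - 3*w ≤ r.1 then 0 else Tc B R σ2 Γ J E r

/-- All-ones initial profile, pinned to `0` on the pinning set `A`. -/
def onesPin (Γ w : ℕ) : Fin Γ → ℝ :=
  fun r => if r.1 < 3*w ∨ Γ - 3*w ≤ r.1 then 0 else 1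

/-- Large section size (`B → ∞`) limit of the underlying potential. -/
def phiLim (R σ2 E : ℝ) : ℝ :=
  (1/(2*R)) * Real.logb 2 ((σ2 + E) * Real.exp (-(E/(σ2+E)))) -
    max 0 (1 - 1/(2 * Real.log 2 * R * (σ2 + E)))

namespace PotHelp

def gpi (B : ℕ) : Measure (Fin B → ℝ) := Measure.pi fun _ => gaussianReal 0 1

instance (B : ℕ) : IsProbabilityMeasure (gpi B) := by
  unfold gpi; infer_instance

/-- `-log` of the posterior weight of `x` for inverse temperature `u`. -/
def LL (B : ℕ) (u : ℝ) (x : Fin B) (y : Fin B → ℝ) : ℝ :=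
  Real.log (∑ j, Real.exp (u * (y j - y x)))

/-- shift of coordinate `x` by `s`. -/
def sh (B : ℕ) (x : Fin B) (s : ℝ) (z : Fin B → ℝ) : Fin B → ℝ :=
  fun i => z i + (if i = x then s else 0)

lemma sh_continuous (B : ℕ) (x : Fin B) (s : ℝ) : Continuous (sh B x s) :=
  continuous_pi fun i => (continuous_apply i).add continuous_const

lemma sumExp_pos {B : ℕ} (u : ℝ) (x : Fin B) (y : Fin B → ℝ) :
    0 < ∑ j, Real.exp (u * (y j - y x)) := by
  have : Nonempty (Fin B) := ⟨x⟩
  exact Finset.sum_pos (fun j _ => Real.exp_pos _) Finset.univ_nonempty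

lemma one_le_sumExp {B : ℕ} (u : ℝ) (x : Fin B) (y : Fin B → ℝ) :
    1 ≤ ∑ j, Real.exp (u * (y j - y x)) := by
  have h := Finset.single_le_sum (f := fun j => Real.exp (u * (y j - y x)))
    (fun j _ => (Real.exp_pos _).le) (Finset.mem_univ x)
  simpa using h

lemma LL_nonneg {B : ℕ} (u : ℝ) (x : Fin B) (y : Fin B → ℝ) : 0 ≤ LL B u x y :=
  Real.log_nonneg (one_le_sumExp u x y)

lemma LL_continuous (B : ℕ) (u : ℝ) (x : Fin B) : Continuous (LL B u x) := by
  refine Continuous.log ?_ fun y => (sumExp_pos u x y).ne'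
  exact continuous_finset_sum _ fun j _ =>
    (continuous_const.mul ((continuous_apply j).sub (continuous_apply x))).rexp

lemma abs_le_sum_abs {B : ℕ} (x : Fin B) (y : Fin B → ℝ) : |y x| ≤ ∑ j, |y j| :=
  Finset.single_le_sum (f := fun j => |y j|) (fun j _ => abs_nonneg _) (Finset.mem_univ x)

lemma LL_le {B : ℕ} (hB : 1 ≤ B) (u : ℝ) (x : Fin B) (y : Fin B → ℝ) :
    LL B u x y ≤ Real.log B + 2 * B * |u| * ∑ j, |y j| := by
  have hsum : 0 ≤ ∑ j, |y j| := Finset.sum_nonneg fun j _ => abs_nonneg _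
  have hM : ∀ j : Fin B, u * (y j - y x) ≤ 2 * B * |u| * ∑ j, |y j| := by
    intro j
    have h1 : u * (y j - y x) ≤ |u| * (|y j| + |y x|) := by
      calc u * (y j - y x) ≤ |u * (y j - y x)| := le_abs_self _
        _ = |u| * |y j - y x| := abs_mul _ _
        _ ≤ |u| * (|y j| + |y x|) := by
            exact mul_le_mul_of_nonneg_left (abs_sub _ _) (abs_nonneg u)
    refine h1.trans ?_
    have h2 : |y j| + |y x| ≤ 2 * ∑ j, |y j| := by
      have := abs_le_sum_abs j y
      have := abs_le_sum_abs x y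
      linarith
    calc |u| * (|y j| + |y x|) ≤ |u| * (2 * ∑ j, |y j|) :=
          mul_le_mul_of_nonneg_left h2 (abs_nonneg u)
      _ ≤ 2 * B * |u| * ∑ j, |y j| := by
          have hB1 : (1 : ℝ) ≤ B := by exact_mod_cast hB
          have h3 : 0 ≤ ((B : ℝ) - 1) * |u| * ∑ j, |y j| :=
            mul_nonneg (mul_nonneg (by linarith) (abs_nonneg u)) hsum
          nlinarith
  have hsum2 : ∑ j, Real.exp (u * (y j - y x)) ≤
      (B : ℝ) * Real.exp (2 * B * |u| * ∑ j, |y j|) := by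
    calc ∑ j, Real.exp (u * (y j - y x))
        ≤ ∑ _j : Fin B, Real.exp (2 * B * |u| * ∑ j, |y j|) :=
          Finset.sum_le_sum fun j _ => Real.exp_le_exp.2 (hM j)
      _ = (B : ℝ) * Real.exp (2 * B * |u| * ∑ j, |y j|) := by
          rw [Finset.sum_const, Finset.card_univ, Fintype.card_fin, nsmul_eq_mul]
  calc LL B u x y ≤ Real.log ((B : ℝ) * Real.exp (2 * B * |u| * ∑ j, |y j|)) :=
        Real.log_le_log (sumExp_pos u x y) hsum2
    _ = Real.log B + 2 * B * |u| * ∑ j, |y j| := by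
        rw [Real.log_mul (by positivity) (Real.exp_ne_zero _), Real.log_exp]


lemma gpi_eq_stdGauss (B : ℕ) : gpi B = stdGauss B := rfl

lemma gaussPDF_shift (s t : ℝ) :
    gaussianPDFReal s 1 t = gaussianPDFReal 0 1 t * Real.exp (s * t - s ^ 2 / 2) := by
  simp only [gaussianPDFReal, NNReal.coe_one, mul_one, sub_zero]
  rw [mul_assoc, ← Real.exp_add]
  congr 1
  ring

lemma gaussian_withDensity (s : ℝ) :
    gaussianReal s 1 = (gaussianReal 0 1).withDensity
      (fun t => ENNReal.ofReal (Real.exp (s * t - s ^ 2 / 2))) := by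
  have hg : Measurable fun t : ℝ => ENNReal.ofReal (Real.exp (s * t - s ^ 2 / 2)) :=
    (measurable_exp.comp ((measurable_const.mul measurable_id).sub measurable_const)).ennreal_ofReal
  rw [gaussianReal_of_var_ne_zero _ one_ne_zero, gaussianReal_of_var_ne_zero _ one_ne_zero,
    ← withDensity_mul _ (measurable_gaussianPDF 0 1) hg]
  congr 1
  funext t
  simp only [Pi.mul_apply, gaussianPDF]
  rw [← ENNReal.ofReal_mul (gaussianPDFReal_nonneg 0 1 t), ← gaussPDF_shift]

lemma pdf01_toReal (t : ℝ) :
    (gaussianPDF 0 1 t).toReal = (Real.sqrt (2 * π))⁻¹ * Real.exp (-(t ^ 2) / 2) := by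
  rw [gaussianPDF, ENNReal.toReal_ofReal (gaussianPDFReal_nonneg 0 1 t)]
  simp [gaussianPDFReal]

lemma exp_key (a t : ℝ) :
    Real.exp (a * t) * Real.exp (-(t ^ 2) / 2) ≤
      Real.exp (a ^ 2) * Real.exp (-(1/4 : ℝ) * t ^ 2) := by
  rw [← Real.exp_add, ← Real.exp_add]
  refine Real.exp_le_exp.2 ?_
  nlinarith [sq_nonneg (t / 2 - a)]

lemma integrable_exp_mul_gauss (a : ℝ) :
    Integrable (fun t => Real.exp (a * t)) (gaussianReal 0 1) := by
  rw [gaussianReal_of_var_ne_zero _ one_ne_zero,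
    integrable_withDensity_iff (measurable_gaussianPDF 0 1)
      (Filter.Eventually.of_forall fun t => ENNReal.ofReal_lt_top)]
  have hb : Integrable (fun t : ℝ => ((Real.sqrt (2 * π))⁻¹ * Real.exp (a ^ 2)) *
      Real.exp (-(1/4 : ℝ) * t ^ 2)) volume :=
    (integrable_exp_neg_mul_sq (by norm_num)).const_mul _
  refine hb.mono' ?_ (Filter.Eventually.of_forall fun t => ?_)
  · exact ((measurable_const.mul measurable_id).exp.mul
      (measurable_gaussianPDF 0 1).ennreal_toReal).aestronglyMeasurable
  · rw [pdf01_toReal, Real.norm_eq_abs, abs_of_nonneg (by positivity)]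
    have h1 : Real.exp (a * t) * ((Real.sqrt (2 * π))⁻¹ * Real.exp (-(t ^ 2) / 2)) =
        (Real.sqrt (2 * π))⁻¹ * (Real.exp (a * t) * Real.exp (-(t ^ 2) / 2)) := by ring
    have h2 : (Real.sqrt (2 * π))⁻¹ * Real.exp (a ^ 2) * Real.exp (-(1/4 : ℝ) * t ^ 2) =
        (Real.sqrt (2 * π))⁻¹ * (Real.exp (a ^ 2) * Real.exp (-(1/4 : ℝ) * t ^ 2)) := by ring
    rw [h1, h2]
    exact mul_le_mul_of_nonneg_left (exp_key a t) (by positivity)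

lemma integrable_abs_exp_mul_gauss (a : ℝ) :
    Integrable (fun t => |t| * Real.exp (a * t)) (gaussianReal 0 1) := by
  rw [gaussianReal_of_var_ne_zero _ one_ne_zero,
    integrable_withDensity_iff (measurable_gaussianPDF 0 1)
      (Filter.Eventually.of_forall fun t => ENNReal.ofReal_lt_top)]
  have hb : Integrable (fun t : ℝ => ((Real.sqrt (2 * π))⁻¹ * Real.exp (a ^ 2)) *
      |t * Real.exp (-(1/4 : ℝ) * t ^ 2)|) volume :=
    ((integrable_mul_exp_neg_mul_sq (by norm_num)).abs.const_mul _)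
  refine hb.mono' ?_ (Filter.Eventually.of_forall fun t => ?_)
  · exact ((measurable_id.abs.mul (measurable_const.mul measurable_id).exp).mul
      (measurable_gaussianPDF 0 1).ennreal_toReal).aestronglyMeasurable
  · rw [pdf01_toReal, Real.norm_eq_abs, abs_of_nonneg (by positivity)]
    have h1 : |t| * Real.exp (a * t) * ((Real.sqrt (2 * π))⁻¹ * Real.exp (-(t ^ 2) / 2)) =
        (Real.sqrt (2 * π))⁻¹ * (|t| * (Real.exp (a * t) * Real.exp (-(t ^ 2) / 2))) := by ring
    have h2 : (Real.sqrt (2 * π))⁻¹ * Real.exp (a ^ 2) * |t * Real.exp (-(1/4 : ℝ) * t ^ 2)| =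
        (Real.sqrt (2 * π))⁻¹ * (|t| * (Real.exp (a ^ 2) * Real.exp (-(1/4 : ℝ) * t ^ 2))) := by
      rw [abs_mul, abs_of_nonneg (Real.exp_nonneg _)]; ring
    rw [h1, h2]
    exact mul_le_mul_of_nonneg_left
      (mul_le_mul_of_nonneg_left (exp_key a t) (abs_nonneg t)) (by positivity)

lemma lintegral_pi_prod {n : ℕ} (μ : Fin n → Measure ℝ) [∀ i, SigmaFinite (μ i)]
    (f : Fin n → ℝ → ENNReal) (hf : ∀ i, Measurable (f i)) :
    ∫⁻ z, ∏ i, f i (z i) ∂Measure.pi μ = ∏ i, ∫⁻ t, f i t ∂μ i := by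
  induction n with
  | zero => simp [lintegral_const, Measure.pi_empty_univ]
  | succ n ih =>
      have hmp := (measurePreserving_piFinSuccAbove μ 0).symm
      rw [← hmp.lintegral_comp (f := fun z => ∏ i, f i (z i))
        (Finset.measurable_prod _ fun i _ => (hf i).comp (measurable_pi_apply i))]
      simp_rw [MeasurableEquiv.piFinSuccAbove_symm_apply, Fin.insertNthEquiv,
        Equiv.coe_fn_mk, Fin.insertNth_zero, Fin.prod_univ_succ, Fin.cons_zero, Fin.cons_succ,
        Fin.zero_succAbove, cast_eq]
      rw [lintegral_prod_mul (f := f 0) (g := fun x : Fin n → ℝ => ∏ i : Fin n, f i.succ (x i))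
        (hf 0).aemeasurable
        (Finset.measurable_prod _ fun i _ => (hf i.succ).comp (measurable_pi_apply i)).aemeasurable]
      rw [ih (fun j => μ j.succ) (fun j => f j.succ) (fun j => hf j.succ)]


lemma integrable_pi_prod {n : ℕ} (μ : Fin n → Measure ℝ) [∀ i, SigmaFinite (μ i)]
    (f : Fin n → ℝ → ℝ) (hf : ∀ i, Integrable (f i) (μ i)) :
    Integrable (fun z : Fin n → ℝ => ∏ i, f i (z i)) (Measure.pi μ) := by
  induction n with
  | zero =>
      simp only [Finset.univ_eq_empty, Finset.prod_empty]
      rw [integrable_const_iff]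
      right
      exact ⟨by rw [Measure.pi_empty_univ]; exact ENNReal.one_lt_top⟩
  | succ n ih =>
      have hmp := (measurePreserving_piFinSuccAbove μ 0).symm
      rw [← hmp.integrable_comp_emb (MeasurableEquiv.measurableEmbedding _)]
      have : Integrable (fun x : Fin n → ℝ => ∏ j, f j.succ (x j))
          (Measure.pi fun j => μ j.succ) := ih (fun j => μ j.succ) _ (fun j => hf j.succ)
      have h2 := Integrable.mul_prod (hf 0) this
      refine h2.congr ?_
      refine Filter.Eventually.of_forall fun z => ?_
      simp only [Function.comp_def, MeasurableEquiv.piFinSuccAbove_symm_apply, Fin.insertNthEquiv,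
        Equiv.coe_fn_mk, Fin.insertNth_zero, Fin.prod_univ_succ, Fin.cons_zero, Fin.cons_succ,
        Fin.zero_succAbove, cast_eq]

lemma map_sh (B : ℕ) (x : Fin B) (s : ℝ) :
    (gpi B).map (sh B x s) = Measure.pi (fun i => gaussianReal (if i = x then s else 0) 1) := by
  refine (Measure.pi_eq fun A hA => ?_).symm
  rw [Measure.map_apply (sh_continuous B x s).measurable (MeasurableSet.univ_pi hA)]
  have hpre : sh B x s ⁻¹' Set.univ.pi A =
      Set.univ.pi (fun i => (fun t => t + (if i = x then s else 0)) ⁻¹' A i) := by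
    ext z
    simp [sh, Set.mem_pi]
  rw [hpre]
  unfold gpi
  rw [Measure.pi_pi]
  refine Finset.prod_congr rfl fun i _ => ?_
  rw [← Measure.map_apply (measurable_add_const _) (hA i), gaussianReal_map_add_const]
  rw [zero_add]

lemma pi_gauss_withDensity (B : ℕ) (x : Fin B) (s : ℝ) :
    Measure.pi (fun i => gaussianReal (if i = x then s else 0) 1) =
      (gpi B).withDensity (fun y => ENNReal.ofReal (Real.exp (s * y x - s ^ 2 / 2))) := by
  classical
  refine Measure.pi_eq fun A hA => ?_
  set d : ℝ → ENNReal := fun t => ENNReal.ofReal (Real.exp (s * t - s ^ 2 / 2)) with hd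
  have hdm : Measurable d :=
    (measurable_exp.comp ((measurable_const.mul measurable_id).sub measurable_const)).ennreal_ofReal
  set g : Fin B → ℝ → ENNReal := fun i t =>
    if i = x then Set.indicator (A i) d t else Set.indicator (A i) 1 t with hg
  have hkey : ∀ y : Fin B → ℝ,
      Set.indicator (Set.univ.pi A) (fun y => d (y x)) y = ∏ i, g i (y i) := by
    intro y
    by_cases hy : y ∈ Set.univ.pi A
    · rw [Set.indicator_of_mem hy]
      rw [Finset.prod_eq_single x]
      · simp only [hg, if_pos rfl]
        rw [Set.indicator_of_mem (hy x (Set.mem_univ x))]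
      · intro i _ hix
        simp only [hg, if_neg hix]
        rw [Set.indicator_of_mem (hy i (Set.mem_univ i))]
        rfl
      · intro h; exact absurd (Finset.mem_univ x) h
    · rw [Set.indicator_of_notMem hy]
      obtain ⟨i₀, -, hi₀⟩ : ∃ i₀, i₀ ∈ Set.univ ∧ y i₀ ∉ A i₀ := by
        simpa [Set.mem_pi] using hy
      refine (Finset.prod_eq_zero (Finset.mem_univ i₀) ?_).symm
      simp only [hg]
      by_cases hix : i₀ = x
      · subst hix
        rw [if_pos rfl, Set.indicator_of_notMem hi₀]
      · rw [if_neg hix, Set.indicator_of_notMem hi₀]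
  rw [withDensity_apply _ (MeasurableSet.univ_pi hA)]
  rw [← lintegral_indicator (MeasurableSet.univ_pi hA)]
  calc ∫⁻ y, Set.indicator (Set.univ.pi A) (fun y => d (y x)) y ∂gpi B
      = ∫⁻ y, ∏ i, g i (y i) ∂gpi B := by
        refine lintegral_congr fun y => hkey y
    _ = ∏ i, ∫⁻ t, g i t ∂gaussianReal 0 1 := by
        refine lintegral_pi_prod _ g fun i => ?_
        by_cases hix : i = x
        · subst hix
          simp only [hg, if_pos rfl]
          exact hdm.indicator (hA i)
        · simp only [hg, if_neg hix]
          exact measurable_one.indicator (hA i)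
    _ = ∏ i, (gaussianReal (if i = x then s else 0) 1) (A i) := by
        refine Finset.prod_congr rfl fun i _ => ?_
        by_cases hix : i = x
        · subst hix
          simp only [hg, if_pos rfl]
          rw [lintegral_indicator (hA i), ← withDensity_apply _ (hA i),
            ← gaussian_withDensity]
          simp
        · simp only [hg, if_neg hix]
          rw [lintegral_indicator (hA i)]
          simp

lemma integral_sh (B : ℕ) (x : Fin B) (s : ℝ) (f : (Fin B → ℝ) → ℝ) (hf : Continuous f) :
    ∫ z, f (sh B x s z) ∂gpi B =
      ∫ y, Real.exp (s * y x - s ^ 2 / 2) * f y ∂gpi B := by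
  have h1 : ∫ z, f (sh B x s z) ∂gpi B = ∫ y, f y ∂(gpi B).map (sh B x s) := by
    rw [integral_map (sh_continuous B x s).measurable.aemeasurable
      hf.aestronglyMeasurable]
  rw [h1, map_sh, pi_gauss_withDensity]
  have h2 : (fun y : Fin B → ℝ => ENNReal.ofReal (Real.exp (s * y x - s ^ 2 / 2))) =
      fun y => ((Real.exp (s * y x - s ^ 2 / 2)).toNNReal : ENNReal) := rfl
  rw [h2, integral_withDensity_eq_integral_smul]
  · refine integral_congr_ae (Filter.Eventually.of_forall fun y => ?_)
    simp only [NNReal.smul_def, smul_eq_mul]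
    rw [Real.coe_toNNReal _ (Real.exp_nonneg _)]
  · exact (measurable_exp.comp ((measurable_const.mul (measurable_pi_apply x)).sub
      measurable_const)).real_toNNReal

lemma integrable_abs_gauss : Integrable (fun t : ℝ => |t|) (gaussianReal 0 1) := by
  have := integrable_abs_exp_mul_gauss 0
  simpa using this

/-- Integrability of a function of one coordinate. -/
lemma integrable_coord (B : ℕ) (x : Fin B) (g : ℝ → ℝ)
    (hg : Integrable g (gaussianReal 0 1)) :
    Integrable (fun z : Fin B → ℝ => g (z x)) (gpi B) := by
  classical
  have h := integrable_pi_prod (fun _ => gaussianReal 0 1)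
    (fun i t => if i = x then g t else 1) (fun i => by
      by_cases hix : i = x
      · simpa [hix] using hg
      · simpa [hix] using (integrable_const (1:ℝ)))
  refine h.congr (Filter.Eventually.of_forall fun z => ?_)
  simp only []
  rw [Finset.prod_eq_single x (fun i _ hix => by simp [hix]) (fun h => absurd (mem_univ x) h)]
  simp

/-- Integrability of a product of functions of two distinct coordinates. -/
lemma integrable_two_coord (B : ℕ) (x j : Fin B) (hxj : j ≠ x) (g h : ℝ → ℝ)
    (hg : Integrable g (gaussianReal 0 1)) (hh : Integrable h (gaussianReal 0 1)) :
    Integrable (fun z : Fin B → ℝ => g (z x) * h (z j)) (gpi B) := by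
  classical
  have hint := integrable_pi_prod (fun _ => gaussianReal 0 1)
    (fun i t => if i = x then g t else if i = j then h t else 1) (fun i => by
      by_cases hix : i = x
      · simpa [hix] using hg
      · by_cases hij : i = j
        · simpa [hix, hij, hxj] using hh
        · simpa [hix, hij] using (integrable_const (1:ℝ)))
  refine hint.congr (Filter.Eventually.of_forall fun z => ?_)
  simp only []
  rw [← Finset.mul_prod_erase Finset.univ _ (Finset.mem_univ x)]
  rw [← Finset.mul_prod_erase (Finset.univ.erase x) _
    (Finset.mem_erase.2 ⟨hxj, Finset.mem_univ j⟩)]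
  rw [Finset.prod_eq_one (fun i hi => by
    obtain ⟨hij, hi2⟩ := Finset.mem_erase.1 hi
    obtain ⟨hix, -⟩ := Finset.mem_erase.1 hi2
    simp [hix, hij])]
  simp [hxj]

/-- weighted integrability of `LL`. -/
lemma integrable_exp_LL (B : ℕ) (hB : 1 ≤ B) (a u : ℝ) (x : Fin B) :
    Integrable (fun y : Fin B → ℝ => Real.exp (a * y x) * LL B u x y) (gpi B) := by
  classical
  have hG1 : Integrable (fun y : Fin B → ℝ => Real.exp (a * y x)) (gpi B) :=
    integrable_coord B x _ (integrable_exp_mul_gauss a)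
  have hG2 : ∀ j : Fin B, Integrable (fun y : Fin B → ℝ => |y j| * Real.exp (a * y x)) (gpi B) := by
    intro j
    by_cases hjx : j = x
    · subst hjx
      exact integrable_coord B j _ (integrable_abs_exp_mul_gauss a)
    · have := integrable_two_coord B x j hjx (fun t => Real.exp (a * t)) (fun t => |t|)
        (integrable_exp_mul_gauss a) integrable_abs_gauss
      exact this.congr (Filter.Eventually.of_forall fun z => mul_comm _ _)
  have hdom : Integrable (fun y : Fin B → ℝ => Real.log B * Real.exp (a * y x)
      + (2 * B * |u|) * ∑ j, |y j| * Real.exp (a * y x)) (gpi B) :=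
    (hG1.const_mul _).add ((integrable_finset_sum _ fun j _ => hG2 j).const_mul _)
  refine hdom.mono' ?_ (Filter.Eventually.of_forall fun y => ?_)
  · exact ((continuous_const.mul (continuous_apply x)).rexp.mul
      (LL_continuous B u x)).aestronglyMeasurable
  · have hnn : 0 ≤ Real.exp (a * y x) * LL B u x y :=
      mul_nonneg (Real.exp_nonneg _) (LL_nonneg u x y)
    rw [Real.norm_eq_abs, abs_of_nonneg hnn]
    have hb := mul_le_mul_of_nonneg_left (LL_le hB u x y) (Real.exp_nonneg (a * y x))
    have hsum : ∑ j, |y j| * Real.exp (a * y x) = (∑ j, |y j|) * Real.exp (a * y x) :=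
      (Finset.sum_mul _ _ _).symm
    rw [hsum]
    nlinarith [hb]

/-- integrability of the shifted `LL`. -/
lemma integrable_LL_sh (B : ℕ) (hB : 1 ≤ B) (u s : ℝ) (x : Fin B) :
    Integrable (fun z : Fin B → ℝ => LL B u x (sh B x s z)) (gpi B) := by
  classical
  have habs : ∀ j : Fin B, Integrable (fun z : Fin B → ℝ => |z j|) (gpi B) :=
    fun j => integrable_coord B j _ integrable_abs_gauss
  have hdom : Integrable (fun z : Fin B → ℝ =>
      (Real.log B + 2 * B * |u| * (B * |s|)) + (2 * B * |u|) * ∑ j, |z j|) (gpi B) :=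
    (integrable_const _).add ((integrable_finset_sum _ fun j _ => habs j).const_mul _)
  refine hdom.mono' ((LL_continuous B u x).comp (sh_continuous B x s)).aestronglyMeasurable
    (Filter.Eventually.of_forall fun z => ?_)
  rw [Real.norm_eq_abs, abs_of_nonneg (LL_nonneg u x _)]
  refine (LL_le hB u x _).trans ?_
  have h1 : ∑ j, |sh B x s z j| ≤ (∑ j, |z j|) + B * |s| := by
    have : ∀ j : Fin B, |sh B x s z j| ≤ |z j| + |s| := by
      intro j
      refine (abs_add_le _ _).trans ?_
      have : |(if j = x then s else 0)| ≤ |s| := by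
        by_cases hj : j = x <;> simp [hj]
      linarith
    calc ∑ j, |sh B x s z j| ≤ ∑ j : Fin B, (|z j| + |s|) := Finset.sum_le_sum fun j _ => this j
      _ = (∑ j, |z j|) + B * |s| := by
          rw [Finset.sum_add_distrib, Finset.sum_const, Finset.card_univ, Fintype.card_fin,
            nsmul_eq_mul]
  have h2 : (0:ℝ) ≤ 2 * B * |u| := by positivity
  nlinarith [mul_le_mul_of_nonneg_left h1 h2]

/-- symmetry: the integral does not depend on the distinguished coordinate. -/
lemma integral_LL_sh_symm (B : ℕ) (u s : ℝ) (x x' : Fin B) :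
    ∫ z, LL B u x (sh B x s z) ∂gpi B = ∫ z, LL B u x' (sh B x' s z) ∂gpi B := by
  classical
  set e := Equiv.swap x x' with he
  have hmp : MeasurePreserving (⇑(MeasurableEquiv.piCongrLeft (fun _ : Fin B => ℝ) e))
      (gpi B) (gpi B) := measurePreserving_piCongrLeft (fun _ => gaussianReal 0 1) e
  rw [← hmp.integral_comp' (fun z => LL B u x (sh B x s z))]
  refine integral_congr_ae (Filter.Eventually.of_forall fun z => ?_)
  have happ : ∀ i, (MeasurableEquiv.piCongrLeft (fun _ : Fin B => ℝ) e) z i = z (e i) := by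
    intro i
    simp [MeasurableEquiv.piCongrLeft, Equiv.piCongrLeft, Equiv.piCongrLeft', he]
  have hcomp : ∀ i, sh B x s ((MeasurableEquiv.piCongrLeft (fun _ : Fin B => ℝ) e) z) i =
      sh B x' s z (e i) := by
    intro i
    simp only [sh, happ]
    congr 1
    by_cases hix : i = x
    · subst hix
      simp [he, Equiv.swap_apply_left]
    · have hne : e i ≠ x' := by
        intro h
        apply hix
        have h2 := congrArg e.symm h
        simpa [he, Equiv.symm_swap, Equiv.swap_apply_right] using h2
      simp [hix, hne]
  show LL B u x (sh B x s _) = _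
  unfold LL
  simp_rw [hcomp]
  have hex : e x = x' := Equiv.swap_apply_left x x'
  rw [hex]
  rw [Equiv.sum_comp e (fun j => Real.exp (u * (sh B x' s z j - sh B x' s z x')))]

/-- The partition function at inverse temperature `t`. -/
def ZZ (B : ℕ) (t : ℝ) (y : Fin B → ℝ) : ℝ := ∑ j, Real.exp (t * y j)

lemma ZZ_pos {B : ℕ} (hB : 0 < B) (t : ℝ) (y : Fin B → ℝ) : 0 < ZZ B t y := by
  have : Nonempty (Fin B) := ⟨⟨0, hB⟩⟩
  exact Finset.sum_pos (fun j _ => Real.exp_pos _) Finset.univ_nonempty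

lemma LL_eq_log_ZZ {B : ℕ} (hB : 0 < B) (t : ℝ) (x : Fin B) (y : Fin B → ℝ) :
    LL B t x y = Real.log (ZZ B t y) - t * y x := by
  unfold LL
  have hzz : (∑ j, Real.exp (t * y j)) ≠ 0 := (ZZ_pos hB t y).ne'
  have h : ∑ j, Real.exp (t * (y j - y x)) =
      (∑ j, Real.exp (t * y j)) * Real.exp (-(t * y x)) := by
    rw [Finset.sum_mul]
    refine Finset.sum_congr rfl fun j _ => ?_
    rw [← Real.exp_add]
    congr 1
    ring
  rw [h, Real.log_mul hzz (Real.exp_ne_zero _), Real.log_exp]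
  unfold ZZ
  ring

/-- Pointwise Gibbs inequality. -/
lemma gibbs_pointwise {B : ℕ} (u s : ℝ) (y : Fin B → ℝ) :
    0 ≤ ∑ x, Real.exp (s * y x) * (LL B u x y - LL B s x y) := by
  rcases Nat.eq_zero_or_pos B with hB | hB
  · subst hB; simp
  have hZs := ZZ_pos hB s y
  have hZu := ZZ_pos hB u y
  set w : Fin B → ℝ := fun x => Real.exp (s * y x) / ZZ B s y with hw
  have hw0 : ∀ x ∈ Finset.univ, 0 ≤ w x := fun x _ => by positivity
  have hw1 : ∑ x, w x = 1 := by
    rw [hw]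
    simp only []
    rw [← Finset.sum_div]
    exact div_self (ZZ_pos hB s y).ne'
  have hjen := Real.geom_mean_le_arith_mean_weighted Finset.univ w
    (fun x => Real.exp ((u - s) * y x)) hw0 hw1 (fun x _ => (Real.exp_pos _).le)
  have hlhs : ∏ x, Real.exp ((u - s) * y x) ^ w x =
      Real.exp (∑ x, w x * ((u - s) * y x)) := by
    rw [Real.exp_sum]
    refine Finset.prod_congr rfl fun x _ => ?_
    rw [← Real.exp_mul]
    congr 1
    ring
  rw [hlhs] at hjen
  have hExpLe : Real.exp (∑ x, w x * ((u - s) * y x)) * ZZ B s y ≤ ZZ B u y := by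
    calc Real.exp (∑ x, w x * ((u - s) * y x)) * ZZ B s y
        ≤ (∑ x, w x * Real.exp ((u - s) * y x)) * ZZ B s y :=
          mul_le_mul_of_nonneg_right hjen hZs.le
      _ = ZZ B u y := by
          rw [Finset.sum_mul]
          unfold ZZ
          refine Finset.sum_congr rfl fun x _ => ?_
          rw [hw]
          simp only []
          rw [div_mul_eq_mul_div]
          change _ / ZZ B s y * ZZ B s y = _
          rw [div_mul_cancel₀ _ hZs.ne']
          rw [← Real.exp_add]
          congr 1
          ring
  have hlog : ∑ x, w x * ((u - s) * y x) ≤ Real.log (ZZ B u y) - Real.log (ZZ B s y) := by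
    have h1 : Real.exp (∑ x, w x * ((u - s) * y x)) ≤ ZZ B u y / ZZ B s y :=
      (le_div_iff₀ hZs).2 hExpLe
    have h2 := Real.log_le_log (Real.exp_pos _) h1
    rwa [Real.log_exp, Real.log_div hZu.ne' hZs.ne'] at h2
  have hA : ∑ x, Real.exp (s * y x) * (LL B u x y - LL B s x y) =
      ZZ B s y * (Real.log (ZZ B u y) - Real.log (ZZ B s y)) -
        ∑ x, Real.exp (s * y x) * ((u - s) * y x) := by
    calc ∑ x, Real.exp (s * y x) * (LL B u x y - LL B s x y)
        = ∑ x, (Real.exp (s * y x) * (Real.log (ZZ B u y) - Real.log (ZZ B s y)) -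
            Real.exp (s * y x) * ((u - s) * y x)) := by
          refine Finset.sum_congr rfl fun x _ => ?_
          rw [LL_eq_log_ZZ hB, LL_eq_log_ZZ hB]
          ring
      _ = (∑ x, Real.exp (s * y x) * (Real.log (ZZ B u y) - Real.log (ZZ B s y))) -
            ∑ x, Real.exp (s * y x) * ((u - s) * y x) := Finset.sum_sub_distrib _ _
      _ = ZZ B s y * (Real.log (ZZ B u y) - Real.log (ZZ B s y)) -
            ∑ x, Real.exp (s * y x) * ((u - s) * y x) := by
          rw [← Finset.sum_mul]
          rfl
  have hB2 : ∑ x, Real.exp (s * y x) * ((u - s) * y x) =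
      ZZ B s y * ∑ x, w x * ((u - s) * y x) := by
    rw [Finset.mul_sum]
    refine Finset.sum_congr rfl fun x _ => ?_
    rw [hw]
    simp only []
    field_simp
  rw [hA, hB2]
  have h3 : ZZ B s y * ∑ x, w x * ((u - s) * y x) ≤
      ZZ B s y * (Real.log (ZZ B u y) - Real.log (ZZ B s y)) :=
    mul_le_mul_of_nonneg_left hlog hZs.le
  linarith

/-- The Gibbs step: the Bayes-optimal temperature minimizes the expected log-loss. -/
lemma gibbs_integral (B : ℕ) (hB : 1 ≤ B) (u s : ℝ) (x0 : Fin B) :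
    ∫ z, LL B s x0 (sh B x0 s z) ∂gpi B ≤ ∫ z, LL B u x0 (sh B x0 s z) ∂gpi B := by
  classical
  have hBpos : (0:ℝ) < B := by exact_mod_cast hB
  have hint : ∀ (t : ℝ) (x : Fin B),
      Integrable (fun y : Fin B → ℝ => Real.exp (s * y x - s^2/2) * LL B t x y) (gpi B) := by
    intro t x
    have h := (integrable_exp_LL B hB s t x).const_mul (Real.exp (-(s^2/2)))
    refine h.congr (Filter.Eventually.of_forall fun y => ?_)
    simp only []
    rw [← mul_assoc, ← Real.exp_add]
    congr 2
    ring
  have hintd : ∀ x : Fin B, Integrable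
      (fun y : Fin B → ℝ => Real.exp (s * y x - s^2/2) * (LL B u x y - LL B s x y)) (gpi B) :=
    fun x => ((hint u x).sub (hint s x)).congr
      (Filter.Eventually.of_forall fun y => (mul_sub _ _ _).symm)
  have hconv : ∀ (t : ℝ) (x : Fin B), ∫ z, LL B t x (sh B x s z) ∂gpi B =
      ∫ y, Real.exp (s * y x - s^2/2) * LL B t x y ∂gpi B :=
    fun t x => integral_sh B x s (LL B t x) (LL_continuous B t x)
  have hterm : ∀ x : Fin B,
      ∫ y, Real.exp (s * y x - s^2/2) * (LL B u x y - LL B s x y) ∂gpi B =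
      ∫ z, LL B u x0 (sh B x0 s z) ∂gpi B - ∫ z, LL B s x0 (sh B x0 s z) ∂gpi B := by
    intro x
    have heq : (fun y : Fin B → ℝ => Real.exp (s * y x - s^2/2) * (LL B u x y - LL B s x y)) =
        fun y => Real.exp (s * y x - s^2/2) * LL B u x y -
          Real.exp (s * y x - s^2/2) * LL B s x y := by
      funext y
      ring
    rw [heq, integral_sub (hint u x) (hint s x), ← hconv u x, ← hconv s x,
      integral_LL_sh_symm B u s x x0, integral_LL_sh_symm B s s x x0]
  have key : ∫ z, LL B u x0 (sh B x0 s z) ∂gpi B - ∫ z, LL B s x0 (sh B x0 s z) ∂gpi B =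
      (B:ℝ)⁻¹ * ∑ x : Fin B,
        ∫ y, Real.exp (s * y x - s^2/2) * (LL B u x y - LL B s x y) ∂gpi B := by
    rw [Finset.sum_congr rfl (fun x _ => hterm x), Finset.sum_const, Finset.card_univ,
      Fintype.card_fin, nsmul_eq_mul, ← mul_assoc, inv_mul_cancel₀ hBpos.ne', one_mul]
  have hnn : 0 ≤ ∫ z, LL B u x0 (sh B x0 s z) ∂gpi B -
      ∫ z, LL B s x0 (sh B x0 s z) ∂gpi B := by
    rw [key]
    refine mul_nonneg (by positivity) ?_
    rw [← integral_finset_sum _ (fun x _ => hintd x)]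
    refine integral_nonneg fun y => ?_
    have h2 : ∑ x : Fin B, Real.exp (s * y x - s^2/2) * (LL B u x y - LL B s x y) =
        Real.exp (-(s^2/2)) * ∑ x, Real.exp (s * y x) * (LL B u x y - LL B s x y) := by
      rw [Finset.mul_sum]
      refine Finset.sum_congr rfl fun x _ => ?_
      rw [← mul_assoc, ← Real.exp_add]
      congr 2
      ring
    show 0 ≤ ∑ x : Fin B, Real.exp (s * y x - s^2/2) * (LL B u x y - LL B s x y)
    rw [h2]
    exact mul_nonneg (Real.exp_nonneg _) (gibbs_pointwise u s y)
  linarith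

lemma LL_sh_mono {B : ℕ} (u : ℝ) (hu : 0 ≤ u) (x : Fin B) {s₁ s₂ : ℝ} (h : s₂ ≤ s₁)
    (z : Fin B → ℝ) : LL B u x (sh B x s₁ z) ≤ LL B u x (sh B x s₂ z) := by
  unfold LL
  refine Real.log_le_log (sumExp_pos _ _ _) (Finset.sum_le_sum fun j _ => ?_)
  refine Real.exp_le_exp.2 ?_
  by_cases hj : j = x
  · subst hj; simp
  · have e1 : ∀ s : ℝ, sh B x s z j - sh B x s z x = z j - z x - s := by
      intro s
      unfold sh
      simp [hj]
      ring
    rw [e1 s₁, e1 s₂]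
    exact mul_le_mul_of_nonneg_left (by linarith) hu

lemma Su_mono (B : ℕ) (hB : 2 ≤ B) : MonotoneOn (Su B) (Set.Ioi (0:ℝ)) := by
  haveI : NeZero B := ⟨by omega⟩
  set x0 : Fin B := 0 with hx0
  have hB1R : (1:ℝ) < B := by exact_mod_cast hB
  have hcpos : 0 < Real.logb 2 B := Real.logb_pos one_lt_two hB1R
  have hc : 0 ≤ Real.logb 2 B := hcpos.le
  have hlogB : 0 ≤ Real.log B := Real.log_nonneg (by exact_mod_cast (by omega : 1 ≤ B))
  -- `Su` in terms of `LL`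
  have key : ∀ Sn : ℝ, 0 < Sn → Su B Sn = (Real.log B)⁻¹ *
      ∫ z, LL B (Real.sqrt (Real.logb 2 B) / Sn) x0
        (sh B x0 (Real.sqrt (Real.logb 2 B) / Sn) z) ∂gpi B := by
    intro Sn hSn
    set s := Real.sqrt (Real.logb 2 B) / Sn with hs
    unfold Su
    rw [dif_pos (by omega : 0 < B)]
    rw [← integral_const_mul, gpi_eq_stdGauss]
    refine integral_congr_ae (Filter.Eventually.of_forall fun z => ?_)
    have hL : LL B s x0 (sh B x0 s z) = Real.log (1 + ∑ i ∈ Finset.univ.erase x0,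
        Real.exp ((z i - z x0) * Real.sqrt (Real.logb 2 B) / Sn - Real.logb 2 B / Sn ^ 2)) := by
      unfold LL
      rw [← Finset.add_sum_erase Finset.univ _ (Finset.mem_univ x0)]
      congr 1
      congr 1
      · simp
      · refine Finset.sum_congr rfl fun i hi => ?_
        have hix : i ≠ x0 := (Finset.mem_erase.1 hi).1
        congr 1
        have e1 : sh B x0 s z i - sh B x0 s z x0 = z i - z x0 - s := by
          unfold sh
          simp [hix]
          ring
        have hsq : s * s = Real.logb 2 B / Sn ^ 2 := by
          rw [hs, div_mul_div_comm, Real.mul_self_sqrt hc, sq]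
        rw [e1]
        have e2 : s * (z i - z x0 - s) = (z i - z x0) * s - s * s := by ring
        rw [e2, hsq, hs, mul_div_assoc]
    simp only []
    rw [hL, ← Real.log_div_log, div_eq_inv_mul]
  intro a ha b hb hab
  have ha' : (0:ℝ) < a := ha
  have hb' : (0:ℝ) < b := hb
  set s₁ := Real.sqrt (Real.logb 2 B) / a with hs₁
  set s₂ := Real.sqrt (Real.logb 2 B) / b with hs₂
  have hs₂pos : 0 ≤ s₂ := by positivity
  have h21 : s₂ ≤ s₁ := by
    apply div_le_div_of_nonneg_left (Real.sqrt_nonneg _) ha' hab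
  rw [key a ha', key b hb']
  refine mul_le_mul_of_nonneg_left ?_ (by positivity)
  calc ∫ z, LL B s₁ x0 (sh B x0 s₁ z) ∂gpi B
      ≤ ∫ z, LL B s₂ x0 (sh B x0 s₁ z) ∂gpi B := gibbs_integral B (by omega) s₂ s₁ x0
    _ ≤ ∫ z, LL B s₂ x0 (sh B x0 s₂ z) ∂gpi B := by
        refine integral_mono (integrable_LL_sh B (by omega) s₂ s₁ x0)
          (integrable_LL_sh B (by omega) s₂ s₂ x0) ?_
        exact fun z => LL_sh_mono s₂ hs₂pos x0 h21 z

lemma Uu_mono (R σ2 : ℝ) (hR : 0 < R) (hσ2 : 0 < σ2) :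
    MonotoneOn (Uu R σ2) (Set.Ici (0:ℝ)) := by
  set φ : ℝ → ℝ := fun E => Real.log (σ2 + E) - E / (σ2 + E) with hφ
  have hden : ∀ E : ℝ, E ∈ Set.Ici (0:ℝ) → 0 < σ2 + E := by
    intro E hE
    have : (0:ℝ) ≤ E := hE
    linarith
  have hUu : ∀ E ∈ Set.Ici (0:ℝ), Uu R σ2 E = (1 / (2*R) * (Real.log 2)⁻¹) * φ E := by
    intro E hE
    unfold Uu
    rw [← Real.log_div_log]
    rw [Real.log_mul (hden E hE).ne' (Real.exp_ne_zero _), Real.log_exp]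
    rw [hφ]
    simp only []
    field_simp
    ring
  have hmono : MonotoneOn φ (Set.Ici (0:ℝ)) := by
    have hd : ∀ E ∈ Set.Ioi (0:ℝ), HasDerivAt φ (1/(σ2+E) - σ2/(σ2+E)^2) E := by
      intro E hE
      have hEpos : (0:ℝ) < E := hE
      have hne : σ2 + E ≠ 0 := by positivity
      have h1 : HasDerivAt (fun E : ℝ => σ2 + E) 1 E := (hasDerivAt_id E).const_add σ2
      have h2 : HasDerivAt (fun E : ℝ => Real.log (σ2 + E)) (1/(σ2+E)) E := by
        have := h1.log hne
        simpa using this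
      have h3 : HasDerivAt (fun E : ℝ => E / (σ2 + E)) ((1*(σ2+E) - E*1)/(σ2+E)^2) E :=
        (hasDerivAt_id E).div h1 hne
      have h4 := h2.sub h3
      refine h4.congr_deriv ?_
      ring
    refine monotoneOn_of_deriv_nonneg (convex_Ici 0) ?_ ?_ ?_
    · refine ContinuousOn.sub ?_ ?_
      · exact (continuousOn_const.add continuousOn_id).log (fun E hE => (hden E hE).ne')
      · exact continuousOn_id.div (continuousOn_const.add continuousOn_id)
          (fun E hE => (hden E hE).ne')
    · rw [interior_Ici]
      exact fun E hE => ((hd E hE).differentiableAt).differentiableWithinAt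
    · rw [interior_Ici]
      intro E hE
      rw [(hd E hE).deriv]
      have hEpos : (0:ℝ) < E := hE
      have heq : 1/(σ2+E) - σ2/(σ2+E)^2 = E/(σ2+E)^2 := by
        field_simp
        ring
      rw [heq]
      positivity
  intro a ha b hb hab
  rw [hUu a ha, hUu b hb]
  exact mul_le_mul_of_nonneg_left (hmono ha hb hab) (by positivity)

end PotHelp

/-- both terms of the underlying potential are increasing in the
effective noise: the entropy term `S_u` is nondecreasing on `(0,∞)` and the energy
term `U_u` is nondecreasing on `[0,∞)`. -/
theorem potential_terms_monotone
    (B : ℕ) (hB : 2 ≤ B) (R σ2 : ℝ) (hR : 0 < R) (hσ2 : 0 < σ2) :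
    MonotoneOn (Su B) (Set.Ioi (0:ℝ)) ∧ MonotoneOn (Uu R σ2) (Set.Ici (0:ℝ)) :=
  ⟨PotHelp.Su_mono B hB, PotHelp.Uu_mono R σ2 hR hσ2⟩
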